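/- Let E be a real inner product space (e.g. EuclideanSpace ℝ (Fin d)), let s < 1, r > 0, and x₀, x₁ ∈ E. For u : ℝ → E such that u and τ ↦ ‖u τ‖² are interval-integrable on [s, 1], define the cost J(u) := ∫ τ in s..1, (1/2)‖u τ‖² + (r/2)‖x₀ + (∫ τ in s..1, u τ) − x₁‖². Then J(u) ≥ r‖x₁ − x₀‖²/(2(1 + r(1−s))) for every such u, and the constant control u* ≡ (r/(1 + r(1−s))) • (x₁ − x₀) attains this value: J(u*) = r‖x₁ − x₀‖²/(2(1 + r(1−s))). Hence the constant control u* is optimal for the linear-quadratic terminal-cost control problem ẋ = u, x(s) = x₀. -/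

import Mathlib

open MeasureTheory intervalIntegral

/-- The constant control `u* ≡ (r/(1 + r(1−s))) • (x₁ − x₀)` is optimal for the
linear-quadratic terminal-cost control problem `ẋ = u`, `x(s) = x₀`, with cost
`J(u) = ∫ₛ¹ ½‖u‖² + (r/2)‖x(1) − x₁‖²`: every admissible control has cost at least
`r‖x₁ − x₀‖²/(2(1 + r(1−s)))`, and `u*` attains this value. -/
theorem lq_terminal_cost_optimal_control
    {E : Type*} [NormedAddCommGroup E] [InnerProductSpace ℝ E] [CompleteSpace E]
    (s r : ℝ) (hs : s < 1) (hr : 0 < r) (x₀ x₁ : E)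
    (J : (ℝ → E) → ℝ)
    (hJ : ∀ u : ℝ → E, J u =
      (∫ τ in s..1, (1 / 2) * ‖u τ‖ ^ 2)
        + (r / 2) * ‖x₀ + (∫ τ in s..1, u τ) - x₁‖ ^ 2) :
    (∀ u : ℝ → E, IntervalIntegrable u volume s 1 →
      IntervalIntegrable (fun τ => ‖u τ‖ ^ 2) volume s 1 →
      J u ≥ r * ‖x₁ - x₀‖ ^ 2 / (2 * (1 + r * (1 - s)))) ∧
    J (fun _ => (r / (1 + r * (1 - s))) • (x₁ - x₀)) =
      r * ‖x₁ - x₀‖ ^ 2 / (2 * (1 + r * (1 - s))) := by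
  have hT0 : (0:ℝ) < 1 - s := by linarith
  set T : ℝ := 1 - s with hT
  set a : ℝ := 1 + r * T with ha
  have ha0 : (0:ℝ) < a := by have : 0 < r * T := mul_pos hr hT0; simp only [ha]; linarith
  have hane : a ≠ 0 := ne_of_gt ha0
  have hsle : s ≤ 1 := le_of_lt hs
  set w : E := x₁ - x₀ with hw
  constructor
  · intro u hu hu2
    set p : E := (r / a) • w with hp
    set I : E := ∫ τ in s..1, u τ with hI
    have hui : IntervalIntegrable (fun τ => (inner ℝ p (u τ) : ℝ)) volume s 1 :=
      ⟨(innerSL ℝ p).integrable_comp hu.1, (innerSL ℝ p).integrable_comp hu.2⟩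
    have hcomm : (∫ τ in s..1, (inner ℝ p (u τ) : ℝ)) = (inner ℝ p I : ℝ) := by
      have := (innerSL ℝ p).intervalIntegral_comp_comm hu (a := s) (b := 1)
      simpa using this
    have hmono : (∫ τ in s..1, ((inner ℝ p (u τ) : ℝ) - (1/2) * ‖p‖ ^ 2))
        ≤ ∫ τ in s..1, (1 / 2) * ‖u τ‖ ^ 2 := by
      apply intervalIntegral.integral_mono_on hsle (hui.sub (intervalIntegrable_const))
        (hu2.const_mul (1/2))
      intro τ _
      have h1 := norm_sub_sq_real (u τ) p
      have h2 := real_inner_comm p (u τ)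
      nlinarith [sq_nonneg (‖u τ - p‖)]
    have hA : (∫ τ in s..1, (1 / 2) * ‖u τ‖ ^ 2)
        ≥ (inner ℝ p I : ℝ) - (T / 2) * ‖p‖ ^ 2 := by
      have heq : (∫ τ in s..1, ((inner ℝ p (u τ) : ℝ) - (1/2) * ‖p‖ ^ 2))
          = (inner ℝ p I : ℝ) - (T / 2) * ‖p‖ ^ 2 := by
        rw [intervalIntegral.integral_sub hui intervalIntegrable_const,
          hcomm, intervalIntegral.integral_const, smul_eq_mul, ← hT]
        ring
      linarith [heq ▸ hmono]
    set q : E := (-(1 / a)) • w with hq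
    have hB : (r / 2) * ‖x₀ + I - x₁‖ ^ 2
        ≥ r * (inner ℝ q (I - w) : ℝ) - (r / 2) * ‖q‖ ^ 2 := by
      have hv : x₀ + I - x₁ = I - w := by rw [hw]; abel
      rw [hv]
      have h1 := norm_sub_sq_real (I - w) q
      have h2 := real_inner_comm q (I - w)
      nlinarith [sq_nonneg ‖(I - w) - q‖]
    rw [hJ u]
    have hpI : (inner ℝ p I : ℝ) = (r / a) * (inner ℝ w I : ℝ) := by
      rw [hp, real_inner_smul_left]
    have hqI : (inner ℝ q (I - w) : ℝ) = (-(1/a)) * ((inner ℝ w I : ℝ) - ‖w‖ ^ 2) := by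
      rw [hq, real_inner_smul_left, inner_sub_right, real_inner_self_eq_norm_sq]
    have hpn : ‖p‖ ^ 2 = (r / a) ^ 2 * ‖w‖ ^ 2 := by
      rw [hp, norm_smul, Real.norm_eq_abs, mul_pow, sq_abs]
    have hqn : ‖q‖ ^ 2 = (1 / a) ^ 2 * ‖w‖ ^ 2 := by
      rw [hq, norm_smul, Real.norm_eq_abs, mul_pow, sq_abs]
      ring
    have key : (inner ℝ p I : ℝ) - (T / 2) * ‖p‖ ^ 2
        + (r * (inner ℝ q (I - w) : ℝ) - (r / 2) * ‖q‖ ^ 2)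
        = r * ‖w‖ ^ 2 / (2 * a) := by
      have hane' : (1:ℝ) + r * T ≠ 0 := by rw [← ha]; exact hane
      rw [hpI, hqI, hpn, hqn, ha]
      field_simp
      ring
    have hrw : r * ‖x₁ - x₀‖ ^ 2 / (2 * (1 + r * (1 - s))) = r * ‖w‖ ^ 2 / (2 * a) := by
      rw [← hw, ← hT, ← ha]
    rw [hrw]
    linarith [hA, hB, key]
  · rw [hJ]
    rw [intervalIntegral.integral_const, intervalIntegral.integral_const]
    rw [← hT]
    have hc : x₀ + T • ((r / a) • w) - x₁ = (-(1/a)) • w := by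
      rw [smul_smul]
      have h1 : x₀ + (T * (r / a)) • w - x₁ = (T * (r / a) - 1) • w := by
        rw [sub_smul, one_smul, hw]; abel
      have h2 : T * (r / a) - 1 = -(1/a) := by
        field_simp
        linarith [ha]
      rw [h1, h2]
    rw [hc]
    have hn1 : ‖(-(1/a)) • w‖ ^ 2 = (1/a)^2 * ‖w‖^2 := by
      rw [norm_smul, Real.norm_eq_abs, mul_pow, sq_abs]
      ring
    have hn2 : ‖(r / a) • w‖ ^ 2 = (r/a)^2 * ‖w‖^2 := by
      rw [norm_smul, Real.norm_eq_abs, mul_pow, sq_abs]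
    rw [hn1, hn2, smul_eq_mul]
    have hane' : (1:ℝ) + r * T ≠ 0 := by rw [← ha]; exact hane
    rw [ha]
    field_simp
    ring
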